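/- arXiv:2605.04626 — 2 statements merged into one kernel-verified Lean document; each statement's English description precedes it below -/
import Mathlib

section
/- Let n ≥ 1 and let u, v, w, r be elements of a commutative ring with u and w invertible. Define the n×n matrices (indexed from 0 to n-1): A with entries A(i,j) = (-1)^{j-i} v^{j+1} C(i,j) + r u^{i+1} w^{j-i} s(i,j), B with entries B(i,j) = δ_{i,j} v^{i+1} + r u^{j+1} ∑_{l=0}^{i} C(i, i-l) s(l,j) (w/u)^{i-l}, C1 with entries (-1)^{i+j} C(i,j), C2 the diagonal matrix with entries (u/w)^i, and C3 the diagonal matrix with entries (w/u)^i, where s : ℕ × ℕ → R is an arbitrary function into the ring. Then A = C1 * C2 * B * C3. -/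
open Matrix Finset

lemma alt_choose_sum (K : Type*) [Field K] (N : ℕ) :
    ∑ m ∈ Finset.range (N+1), (-1:K)^m * (N.choose m) = if N = 0 then 1 else 0 := by
  have h := Int.alternating_sum_range_choose (n := N)
  have h2 := congrArg (Int.cast : ℤ → K) h
  push_cast at h2
  split_ifs with hN <;> simp_all

lemma key_sum (K : Type*) [Field K] (i l : ℕ) :
    ∑ k ∈ Finset.range (i+1), (-1:K)^k * (i.choose k) * (k.choose l)
      = if l = i then (-1:K)^i else 0 := by
  rcases le_or_gt l i with hl | hl
  · have h1 : ∑ k ∈ Finset.range (i+1), (-1:K)^k * (i.choose k) * (k.choose l)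
        = ∑ k ∈ Finset.Ico l (i+1), (-1:K)^k * (i.choose k) * (k.choose l) := by
      rw [Finset.range_eq_Ico, ← Finset.sum_Ico_consecutive _ (Nat.zero_le l) (by omega)]
      have hz : ∑ k ∈ Finset.Ico 0 l, (-1:K)^k * (i.choose k) * (k.choose l) = 0 := by
        apply Finset.sum_eq_zero; intro k hk
        rw [Nat.choose_eq_zero_of_lt (Finset.mem_Ico.mp hk).2]
        simp
      rw [hz, zero_add]
    rw [h1, Finset.sum_Ico_eq_sum_range]
    have h2 : ∀ m ∈ Finset.range (i+1-l),
        (-1:K)^(l+m) * (i.choose (l+m)) * ((l+m).choose l)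
          = ((-1:K)^l * (i.choose l)) * ((-1:K)^m * ((i-l).choose m)) := by
      intro m hm
      rw [Finset.mem_range] at hm
      have hm' : l + m ≤ i := by omega
      have hc := Nat.choose_mul (n := i) (Nat.le_add_right l m)
      have hc' : ((i.choose (l+m) : K) * ((l+m).choose l))
          = (i.choose l : K) * ((i-l).choose (l+m-l)) := by exact_mod_cast congrArg (Nat.cast : ℕ → K) hc
      rw [Nat.add_sub_cancel_left] at hc'
      rw [pow_add]
      calc (-1:K)^l * (-1:K)^m * (i.choose (l+m)) * ((l+m).choose l)
          = ((-1:K)^l * (-1:K)^m) * ((i.choose (l+m) : K) * ((l+m).choose l)) := by ring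
        _ = ((-1:K)^l * (-1:K)^m) * ((i.choose l : K) * ((i-l).choose m)) := by rw [hc']
        _ = ((-1:K)^l * (i.choose l)) * ((-1:K)^m * ((i-l).choose m)) := by ring
    rw [Finset.sum_congr rfl h2, ← Finset.mul_sum]
    have : i + 1 - l = (i - l) + 1 := by omega
    rw [this, alt_choose_sum]
    rcases eq_or_lt_of_le hl with h | h
    · subst h
      simp
    · rw [if_neg (by omega), if_neg (by omega), mul_zero]
  · rw [if_neg (by omega)]
    apply Finset.sum_eq_zero
    intro k hk
    rw [Finset.mem_range] at hk
    rw [Nat.choose_eq_zero_of_lt (show k < l by omega)]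
    simp

theorem stmt_3 (K : Type*) [Field K] (n : ℕ) (hn : 1 ≤ n)
    (u v w r : K) (hu : u ≠ 0) (hw : w ≠ 0) (s : ℕ × ℕ → K) :
    (Matrix.of fun i j : Fin n =>
        (-1 : K) ^ ((i : ℕ) + (j : ℕ)) * v ^ ((j : ℕ) + 1) * ((i : ℕ).choose (j : ℕ)) +
          r * u ^ ((i : ℕ) + 1) * (w ^ (j : ℕ) / w ^ (i : ℕ)) * s ((i : ℕ), (j : ℕ)))
      =
    (Matrix.of fun i j : Fin n =>
        (-1 : K) ^ ((i : ℕ) + (j : ℕ)) * ((i : ℕ).choose (j : ℕ))) *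
    (Matrix.diagonal fun i : Fin n => (u / w) ^ (i : ℕ)) *
    (Matrix.of fun i j : Fin n =>
        (if i = j then v ^ ((i : ℕ) + 1) else 0) +
          r * u ^ ((j : ℕ) + 1) *
            ∑ l ∈ Finset.range ((i : ℕ) + 1),
              ((i : ℕ).choose ((i : ℕ) - l)) * s (l, (j : ℕ)) * (w / u) ^ ((i : ℕ) - l)) *
    (Matrix.diagonal fun i : Fin n => (w / u) ^ (i : ℕ)) := by
  ext i j
  rw [Matrix.mul_diagonal, Matrix.mul_apply]
  simp only [Matrix.mul_diagonal, Matrix.of_apply]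
  simp only [mul_add, Finset.sum_add_distrib, add_mul]
  have huw : (u / w) * (w / u) = 1 := by field_simp
  congr 1
  · -- diagonal part
    have h1 : ∑ x : Fin n, (-1:K) ^ ((i:ℕ) + (x:ℕ)) * ((i:ℕ).choose (x:ℕ)) * (u / w) ^ (x:ℕ) *
        (if x = j then v ^ ((x:ℕ) + 1) else 0)
        = (-1:K) ^ ((i:ℕ) + (j:ℕ)) * ((i:ℕ).choose (j:ℕ)) * (u / w) ^ (j:ℕ) * v ^ ((j:ℕ) + 1) := by
      rw [Finset.sum_eq_single j]
      · rw [if_pos rfl]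
      · intro b _ hb; rw [if_neg hb, mul_zero]
      · intro h; exact absurd (Finset.mem_univ j) h
    rw [h1]
    have h2 : (u / w) ^ (j:ℕ) * (w / u) ^ (j:ℕ) = 1 := by rw [← mul_pow, huw, one_pow]
    calc (-1:K) ^ ((i:ℕ) + (j:ℕ)) * v ^ ((j:ℕ) + 1) * ((i:ℕ).choose (j:ℕ))
        = ((-1:K) ^ ((i:ℕ) + (j:ℕ)) * ((i:ℕ).choose (j:ℕ)) * v ^ ((j:ℕ) + 1))
            * ((u / w) ^ (j:ℕ) * (w / u) ^ (j:ℕ)) := by rw [h2]; ring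
      _ = (-1:K) ^ ((i:ℕ) + (j:ℕ)) * ((i:ℕ).choose (j:ℕ)) * (u / w) ^ (j:ℕ) * v ^ ((j:ℕ) + 1)
            * (w / u) ^ (j:ℕ) := by ring
  · -- Schur part
    set m : ℕ := (i : ℕ) with hm
    have him : m < n := i.isLt
    set F : ℕ → ℕ → K := fun x l =>
      ((-1:K)^x * (m.choose x) * (x.choose l))
        * ((-1:K)^m * (r * u ^ ((j:ℕ) + 1)) * s (l, (j:ℕ)) * (u / w) ^ l) with hF
    have hfin : ∑ x : Fin n, (-1:K) ^ (m + (x:ℕ)) * (m.choose (x:ℕ)) * (u / w) ^ (x:ℕ) *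
          (r * u ^ ((j:ℕ) + 1) *
            ∑ l ∈ Finset.range ((x:ℕ) + 1), ((x:ℕ).choose ((x:ℕ) - l)) * s (l, (j:ℕ)) * (w / u) ^ ((x:ℕ) - l))
        = ∑ x ∈ Finset.range n, (-1:K) ^ (m + x) * (m.choose x) * (u / w) ^ x *
          (r * u ^ ((j:ℕ) + 1) *
            ∑ l ∈ Finset.range (x + 1), (x.choose (x - l)) * s (l, (j:ℕ)) * (w / u) ^ (x - l)) :=
      Fin.sum_univ_eq_sum_range (fun x => (-1:K) ^ (m + x) * (m.choose x) * (u / w) ^ x *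
          (r * u ^ ((j:ℕ) + 1) *
            ∑ l ∈ Finset.range (x + 1), ((x.choose (x - l)) : K) * s (l, (j:ℕ)) * (w / u) ^ (x - l))) n
    rw [hfin]
    have hsub : ∑ x ∈ Finset.range n, (-1:K) ^ (m + x) * (m.choose x) * (u / w) ^ x *
          (r * u ^ ((j:ℕ) + 1) *
            ∑ l ∈ Finset.range (x + 1), (x.choose (x - l)) * s (l, (j:ℕ)) * (w / u) ^ (x - l))
        = ∑ x ∈ Finset.range (m + 1), (-1:K) ^ (m + x) * (m.choose x) * (u / w) ^ x *
          (r * u ^ ((j:ℕ) + 1) *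
            ∑ l ∈ Finset.range (x + 1), (x.choose (x - l)) * s (l, (j:ℕ)) * (w / u) ^ (x - l)) := by
      refine (Finset.sum_subset (Finset.range_subset_range.mpr (by omega)) ?_).symm
      intro x _ hx
      rw [Finset.mem_range] at hx
      rw [Nat.choose_eq_zero_of_lt (show m < x by omega)]
      simp
    rw [hsub]
    have hterm : ∀ x ∈ Finset.range (m + 1),
        (-1:K) ^ (m + x) * (m.choose x) * (u / w) ^ x *
          (r * u ^ ((j:ℕ) + 1) *
            ∑ l ∈ Finset.range (x + 1), (x.choose (x - l)) * s (l, (j:ℕ)) * (w / u) ^ (x - l))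
        = ∑ l ∈ Finset.range (m + 1), F x l := by
      intro x hx
      have hstep : (-1:K) ^ (m + x) * (m.choose x) * (u / w) ^ x *
          (r * u ^ ((j:ℕ) + 1) *
            ∑ l ∈ Finset.range (x + 1), (x.choose (x - l)) * s (l, (j:ℕ)) * (w / u) ^ (x - l))
          = ∑ l ∈ Finset.range (x + 1), F x l := by
        rw [Finset.mul_sum, Finset.mul_sum]
        refine Finset.sum_congr rfl ?_
        intro l hl
        rw [Finset.mem_range] at hl
        have hlx : l ≤ x := by omega
        rw [Nat.choose_symm hlx]
        have hpow : (u / w) ^ x * (w / u) ^ (x - l) = (u / w) ^ l := by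
          calc (u / w) ^ x * (w / u) ^ (x - l)
              = (u / w) ^ l * ((u / w) ^ (x - l) * (w / u) ^ (x - l)) := by
                rw [← mul_assoc, ← pow_add, show l + (x - l) = x by omega]
            _ = (u / w) ^ l := by rw [← mul_pow, huw, one_pow, mul_one]
        simp only [hF]
        rw [← hpow, pow_add]
        ring
      rw [hstep]
      refine Finset.sum_subset (Finset.range_subset_range.mpr (by rw [Finset.mem_range] at hx; omega)) ?_
      intro l _ hl
      rw [Finset.mem_range] at hl
      simp only [hF]
      rw [Nat.choose_eq_zero_of_lt (show x < l by omega)]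
      simp
    rw [Finset.sum_congr rfl hterm, Finset.sum_comm]
    have hinner : ∀ l ∈ Finset.range (m + 1),
        ∑ x ∈ Finset.range (m + 1), F x l
        = (if l = m then (-1:K)^m else 0)
            * ((-1:K)^m * (r * u ^ ((j:ℕ) + 1)) * s (l, (j:ℕ)) * (u / w) ^ l) := by
      intro l _
      simp only [hF]
      rw [← Finset.sum_mul, key_sum]
    rw [Finset.sum_congr rfl hinner]
    rw [Finset.sum_eq_single m]
    · rw [if_pos rfl]
      have h2 : (u / w) ^ m * (w / u) ^ m = 1 := by rw [← mul_pow, huw, one_pow]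
      have h3 : (-1:K)^m * (-1:K)^m = 1 := by
        rw [← pow_add, ← two_mul, pow_mul]; norm_num
      have h4 : (w / u) ^ (j:ℕ) * u ^ ((j:ℕ) + 1) = w ^ (j:ℕ) * u := by
        rw [div_pow, pow_succ]
        field_simp
      have h5 : (u / w) ^ m = u ^ m / w ^ m := div_pow u w m
      calc r * u ^ (m + 1) * (w ^ (j:ℕ) / w ^ m) * s (m, (j:ℕ))
          = ((-1:K)^m * (-1:K)^m) * (r * ((w / u) ^ (j:ℕ) * u ^ ((j:ℕ) + 1)) * s (m, (j:ℕ)) * (u ^ m / w ^ m)) * (u / u ^ (j:ℕ) * u ^ (j:ℕ) / u) := by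
            rw [h3, h4]
            field_simp
            ring
        _ = (-1:K)^m * ((-1:K)^m * (r * u ^ ((j:ℕ) + 1)) * s (m, (j:ℕ)) * (u / w) ^ m) * (w / u) ^ (j:ℕ) := by
            rw [h5]
            field_simp
    · intro b _ hb; rw [if_neg hb, zero_mul]
    · intro h; exact absurd (Finset.self_mem_range_succ m) h
end

section
/- For any permutation σ_I of {1,...,n} defined, for a subset I = {i_1 < ... < i_l} with complement {j_1 < ... < j_k}, as the one-line word i_l, ..., i_1, j_1, ..., j_k, the sign of σ_I equals ∏_{i ∈ I} (-1)^{i-1}. -/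
/-- The one-line word of `σ_I`: the elements of `I` in decreasing order followed by
the elements of the complement of `I` in increasing order.  Here `{1,…,n}` is modelled
by `Fin n` (zero-indexed), so `(-1)^(i-1)` becomes `(-1)^(i : ℕ)`. -/
def sigmaWord {n : ℕ} (I : Finset (Fin n)) : List (Fin n) :=
  (I.sort (· ≤ ·)).reverse ++ (Iᶜ.sort (· ≤ ·))

theorem List.eq_of_perm_of_sorted {α : Type*} {r : α → α → Prop} [Std.Antisymm r]
    {l₁ l₂ : List α} (hp : l₁.Perm l₂) (h₁ : l₁.Pairwise r) (h₂ : l₂.Pairwise r) : l₁ = l₂ :=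
  List.Perm.eq_of_pairwise' h₁ h₂ hp

open List in

lemma sort_erase_max' {n : ℕ} (I : Finset (Fin n)) (h : I.Nonempty) :
    I.sort (· ≤ ·) = ((I.erase (I.max' h)).sort (· ≤ ·)) ++ [I.max' h] := by
  set m := I.max' h
  refine List.eq_of_perm_of_sorted ?_ (Finset.pairwise_sort _ _) ?_
  · refine (?_ : I.sort (· ≤ ·) ~ m :: (I.erase m).sort (· ≤ ·)).trans
      (List.perm_append_singleton _ _).symm
    rw [← Multiset.coe_eq_coe, ← Multiset.cons_coe, Finset.sort_eq, Finset.sort_eq,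
      Finset.erase_val, Multiset.cons_erase (by exact_mod_cast I.max'_mem h)]
  · rw [List.pairwise_append]
    refine ⟨Finset.pairwise_sort _ _, List.pairwise_singleton _ _, ?_⟩
    intro a ha b hb
    rw [List.mem_singleton] at hb
    subst hb
    exact I.le_max' a (Finset.mem_of_mem_erase ((Finset.mem_sort _).mp ha))

lemma drop_ge {n : ℕ} {m : Fin n} {C : List (Fin n)} (hC : C.Pairwise (· ≤ ·)) :
    ∀ b ∈ C.dropWhile (fun x => decide (x < m)), m ≤ b := by
  induction C with
  | nil => simp
  | cons a C ih =>
    rw [List.pairwise_cons] at hC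
    by_cases h : a < m
    · rw [List.dropWhile_cons_of_pos (by simpa)]
      exact ih hC.2
    · rw [List.dropWhile_cons_of_neg (by simpa using h)]
      intro b hb
      rcases List.mem_cons.mp hb with rfl | hb
      · exact not_lt.mp h
      · exact le_trans (not_lt.mp h) (hC.1 b hb)

lemma take_eq_filter {n : ℕ} {m : Fin n} {C : List (Fin n)} (hC : C.Pairwise (· ≤ ·)) :
    C.takeWhile (fun x => decide (x < m)) = C.filter (fun x => decide (x < m)) := by
  induction C with
  | nil => rfl
  | cons a C ih =>
    rw [List.pairwise_cons] at hC
    by_cases h : a < m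
    · rw [List.takeWhile_cons_of_pos (by simpa), List.filter_cons_of_pos (by simpa), ih hC.2]
    · rw [List.takeWhile_cons_of_neg (by simpa using h), List.filter_cons_of_neg (by simpa using h)]
      symm
      rw [List.filter_eq_nil_iff]
      intro b hb
      simp only [decide_eq_true_eq, not_lt]
      exact le_trans (not_lt.mp h) (hC.1 b hb)

open List in
lemma sort_insert_split {n : ℕ} (t : Finset (Fin n)) (m : Fin n) (hm : m ∉ t) :
    (insert m t).sort (· ≤ ·) =
      (t.sort (· ≤ ·)).takeWhile (fun x => decide (x < m)) ++
        m :: (t.sort (· ≤ ·)).dropWhile (fun x => decide (x < m)) := by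
  have hCs : (t.sort (· ≤ ·)).Pairwise (· ≤ ·) := Finset.pairwise_sort _ _
  refine List.eq_of_perm_of_sorted ?_ (Finset.pairwise_sort _ _) ?_
  · refine (?_ : (insert m t).sort (· ≤ ·) ~ m :: t.sort (· ≤ ·)).trans ?_
    · rw [← Multiset.coe_eq_coe, ← Multiset.cons_coe, Finset.sort_eq, Finset.sort_eq,
        Finset.insert_val_of_notMem hm]
    · exact ((List.perm_middle).trans (by rw [List.takeWhile_append_dropWhile])).symm
  · rw [List.pairwise_append]
    refine ⟨List.Pairwise.sublist (List.takeWhile_sublist _) hCs, ?_, ?_⟩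
    · rw [List.pairwise_cons]
      exact ⟨drop_ge hCs, List.Pairwise.sublist (List.dropWhile_sublist _) hCs⟩
    · intro a ha b hb
      have ha' : a < m := by simpa using List.mem_takeWhile_imp ha
      rcases List.mem_cons.mp hb with rfl | hb
      · exact ha'.le
      · exact ha'.le.trans (drop_ge hCs b hb)

lemma sort_filter' {n : ℕ} (s : Finset (Fin n)) (m : Fin n) :
    (s.filter (· < m)).sort (· ≤ ·) = (s.sort (· ≤ ·)).filter (fun x => decide (x < m)) := by
  refine List.eq_of_perm_of_sorted ?_ (Finset.pairwise_sort _ _) ?_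
  · rw [← Multiset.coe_eq_coe, Finset.sort_eq, ← Multiset.filter_coe, Finset.sort_eq,
      Finset.filter_val]
  · exact List.Pairwise.sublist List.filter_sublist (Finset.pairwise_sort _ _)

lemma count_lemma {n : ℕ} (I : Finset (Fin n)) (h : I.Nonempty) :
    (I.erase (I.max' h)).card + (Iᶜ.filter (· < I.max' h)).card = (I.max' h : ℕ) := by
  set m := I.max' h with hm
  have hunion : (I.erase m) ∪ Iᶜ.filter (· < m) = Finset.Iio m := by
    ext x
    simp only [Finset.mem_union, Finset.mem_erase, Finset.mem_filter, Finset.mem_compl,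
      Finset.mem_Iio]
    constructor
    · rintro (⟨hne, hxI⟩ | ⟨_, hlt⟩)
      · exact lt_of_le_of_ne (I.le_max' x hxI) hne
      · exact hlt
    · intro hlt
      by_cases hxI : x ∈ I
      · exact Or.inl ⟨hlt.ne, hxI⟩
      · exact Or.inr ⟨hxI, hlt⟩
  have hdisj : Disjoint (I.erase m) (Iᶜ.filter (· < m)) := by
    rw [Finset.disjoint_left]
    intro a ha ha'
    exact (Finset.mem_compl.mp (Finset.mem_of_mem_filter a ha')) (Finset.mem_of_mem_erase ha)
  rw [← Finset.card_union_of_disjoint hdisj, hunion, Fin.card_Iio]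

theorem stmt_8 (n : ℕ) (I : Finset (Fin n)) (σ : Equiv.Perm (Fin n))
    (hσ : ∀ (p : Fin n) (hp : (p : ℕ) < (sigmaWord I).length),
      σ p = (sigmaWord I).get ⟨(p : ℕ), hp⟩) :
    Equiv.Perm.sign σ = ∏ i ∈ I, (-1 : ℤˣ) ^ (i : ℕ) := by
  have hlen : ∀ (J : Finset (Fin n)), (sigmaWord J).length = n := by
    intro J
    simp only [sigmaWord, List.length_append, List.length_reverse, Finset.length_sort]
    rw [Finset.card_add_card_compl, Fintype.card_fin]
  cases n with
  | zero =>
    have hI : I = ∅ := Finset.eq_empty_of_isEmpty I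
    have hσ1 : σ = 1 := Subsingleton.elim σ 1
    subst hI
    simp [hσ1]
  | succ n =>
    induction I using Finset.strongInduction generalizing σ with
    | _ I ih =>
    rcases I.eq_empty_or_nonempty with rfl | hne
    · have hσ1 : σ = 1 := by
        ext p
        have hp : (p : ℕ) < (sigmaWord (∅ : Finset (Fin (n+1)))).length := by
          rw [hlen]; exact p.2
        have h := hσ p hp
        simp only [sigmaWord, Finset.sort_empty, List.reverse_nil, List.nil_append,
          Finset.compl_empty, Fin.sort_univ, List.get_eq_getElem,
          List.getElem_finRange, Fin.cast_mk, Fin.eta] at h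
        exact congrArg Fin.val h
      simp [hσ1]
    · set m := I.max' hne with hm
      have hmI : m ∈ I := I.max'_mem hne
      set I' := I.erase m with hI'
      set R := ((I'.sort (· ≤ ·)).reverse : List (Fin (n+1))) with hR
      set C := (Iᶜ.sort (· ≤ ·) : List (Fin (n+1))) with hC
      set W := C.takeWhile (fun x => decide (x < m)) with hW
      set D := C.dropWhile (fun x => decide (x < m)) with hD
      set U := R ++ W with hU
      have hsplit : C = W ++ D := (List.takeWhile_append_dropWhile (p := fun x => decide (x < m)) (l := C)).symm
      have hUlen : U.length = (m : ℕ) := by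
        rw [hU, List.length_append, hR, List.length_reverse, Finset.length_sort]
        have h1 : W.length = (Iᶜ.filter (· < m)).card := by
          rw [hW, hC, take_eq_filter (Finset.pairwise_sort _ _), ← sort_filter',
            Finset.length_sort]
        rw [h1, hI']
        exact count_lemma I hne
      have hS1 : sigmaWord I = m :: (U ++ D) := by
        simp only [sigmaWord]
        rw [sort_erase_max' I hne, ← hm, ← hI', List.reverse_append, ← hR, ← hC, hsplit, hU]
        simp
      have hS2 : sigmaWord I' = U ++ m :: D := by
        have hcompl : I'ᶜ = insert m Iᶜ := by rw [hI', Finset.compl_erase]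
        simp only [sigmaWord]
        rw [hcompl, sort_insert_split Iᶜ m (by simpa using hmI), ← hC, ← hW, ← hD, ← hR, hU,
          List.append_assoc]
      have hlenI : (sigmaWord I).length = n + 1 := hlen I
      have hplen : ∀ q : Fin (n+1), (q : ℕ) < (sigmaWord I).length := fun q => by
        rw [hlenI]; exact q.2
      have hσ' : ∀ (p : Fin (n+1)) (hp : (p : ℕ) < (sigmaWord I').length),
          (σ * m.cycleRange) p = (sigmaWord I').get ⟨(p : ℕ), hp⟩ := by
        intro p hp
        rcases lt_trichotomy p m with hlt | heq | hgt
        · have h1 : (σ * m.cycleRange) p = σ (p + 1) := by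
            simp [Equiv.Perm.mul_apply, Fin.cycleRange_of_lt hlt]
          have hv : ((p + 1 : Fin (n+1)) : ℕ) = (p : ℕ) + 1 :=
            Fin.val_add_one_of_lt (lt_of_lt_of_le hlt (Fin.le_last m))
          have hpm : (p : ℕ) < U.length := by rw [hUlen]; exact hlt
          rw [h1, hσ _ (hplen _)]
          simp only [List.get_eq_getElem, hv, hS1, hS2]
          rw [List.getElem_cons_succ, List.getElem_append_left hpm,
            List.getElem_append_left hpm]
        · have h1 : (σ * m.cycleRange) p = σ 0 := by
            simp [Equiv.Perm.mul_apply, heq, Fin.cycleRange_self]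
          rw [h1, hσ _ (hplen _)]
          simp only [List.get_eq_getElem, hS1, hS2, Fin.val_zero]
          rw [List.getElem_cons_zero, List.getElem_append_right (by rw [hUlen, heq])]
          simp [hUlen, heq]
        · have h1 : (σ * m.cycleRange) p = σ p := by
            simp [Equiv.Perm.mul_apply, Fin.cycleRange_of_gt hgt]
          rw [h1, hσ _ (hplen _)]
          simp only [List.get_eq_getElem, hS1, hS2]
          obtain ⟨q, hq⟩ : ∃ q, (p : ℕ) = q + 1 := ⟨(p : ℕ) - 1, by
            have : (m : ℕ) < (p : ℕ) := hgt
            omega⟩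
          have hqm : (m : ℕ) ≤ q := by
            have : (m : ℕ) < (p : ℕ) := hgt
            omega
          simp only [hq]
          rw [List.getElem_cons_succ,
            List.getElem_append_right (by rw [hUlen]; exact hqm),
            List.getElem_append_right (by rw [hUlen]; omega)]
          have h2 : q + 1 - U.length = (q - U.length) + 1 := by rw [hUlen]; omega
          simp only [h2, List.getElem_cons_succ]
      have ihs := ih I' (Finset.erase_ssubset hmI) (σ * m.cycleRange) hσ'
      rw [map_mul, Fin.sign_cycleRange] at ihs
      have hfin : Equiv.Perm.sign σ = (-1 : ℤˣ) ^ (m : ℕ) * ∏ i ∈ I', (-1 : ℤˣ) ^ (i : ℕ) := by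
        rw [← ihs, ← mul_assoc, mul_comm ((-1 : ℤˣ) ^ (m : ℕ)) (Equiv.Perm.sign σ),
          mul_assoc, ← pow_add]
        simp [pow_add, Int.units_mul_self]
      rw [hfin, hI']
      exact Finset.mul_prod_erase I (fun i => (-1 : ℤˣ) ^ (i : ℕ)) hmI
end
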